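/- With V, U, D as above, the sequence of polynomials (P_n) representing an endomorphism φ of V as φ = Σ_n P_n(U) ∘ D^n (pointwise) is unique: if (P_n) and (Q_n) are sequences in R[x] with Σ_{k=0}^{m} P_k(U)(e_{m−k}) = Σ_{k=0}^{m} Q_k(U)(e_{m−k}) for all m ∈ ℕ, then P_n = Q_n for all n. -/

import Mathlib

noncomputable def e (R : Type*) [CommRing R] (n : ℕ) : ℕ →₀ R := Finsupp.single n 1

noncomputable def U (R : Type*) [CommRing R] : Module.End R (ℕ →₀ R) :=
  Finsupp.lmapDomain R R (· + 1)

lemma U_pow_e (R : Type*) [CommRing R] (n : ℕ) : ((U R) ^ n) (e R 0) = e R n := by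
  induction n with
  | zero => rfl
  | succ n ih =>
    rw [pow_succ', Module.End.mul_apply, ih]
    show Finsupp.mapDomain (· + 1) (Finsupp.single n 1) = _
    rw [Finsupp.mapDomain_single]
    rfl

lemma aeval_e_zero (R : Type*) [CommRing R] (p : Polynomial R) :
    (Polynomial.aeval (U R)) p (e R 0) = p.toFinsupp.coeff := by
  induction p using Polynomial.induction_on' with
  | add p q hp hq => simp [map_add, hp, hq]
  | monomial n a =>
    rw [Polynomial.aeval_monomial, Module.End.mul_apply, U_pow_e,
      Module.algebraMap_end_apply, Polynomial.toFinsupp_monomial]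
    simp [e, Finsupp.smul_single]

/-- Uniqueness of the decomposition `φ = Σ_n P_n(U) ∘ Dⁿ`: if two sequences of
polynomials give the same values `Σ_{k=0}^{m} P_k(U)(e_{m−k})` on all basis vectors,
they are equal. -/
theorem endo_decomposition_unique (R : Type*) [CommRing R]
    (P Q : ℕ → Polynomial R)
    (h : ∀ m : ℕ,
      ∑ k ∈ Finset.range (m + 1), (Polynomial.aeval (U R) (P k)) (e R (m - k)) =
      ∑ k ∈ Finset.range (m + 1), (Polynomial.aeval (U R) (Q k)) (e R (m - k))) :
    ∀ n, P n = Q n := by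
  intro n
  induction n using Nat.strong_induction_on with
  | _ n ih =>
    have hn := h n
    rw [Finset.sum_range_succ, Finset.sum_range_succ,
      Finset.sum_congr rfl (fun k hk => by
        rw [ih k (Finset.mem_range.mp hk)])] at hn
    have h0 : (Polynomial.aeval (U R)) (P n) (e R (n - n)) =
        (Polynomial.aeval (U R)) (Q n) (e R (n - n)) := by
      exact add_left_cancel hn
    rw [Nat.sub_self, aeval_e_zero, aeval_e_zero] at h0
    exact Polynomial.toFinsupp_injective (AddMonoidAlgebra.coeff_injective h0)
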